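/- Let n, d ≥ 1, r > 0, λ ∈ [0,1]^n, and let P be a probability measure on ℝ^d supported in the closed Euclidean ball of radius r centered at the origin. Let Z₁,…,Zₙ be a λ-contaminated sample of P. Then for every weight vector w ∈ Δₙ, the variance term satisfies E[‖Σᵢ wᵢ(Zᵢ − E[Zᵢ])‖₂²] ≤ 7r²‖w‖₂² + 16r²(wᵀλ)². -/

import Mathlib

open MeasureTheory ProbabilityTheory

noncomputable section

/-- The family of codomain types used to express the mutual independence of the clean samples
`X₁,…,Xₙ` (valued in `E`) and the Bernoulli contamination indicators `B₁,…,Bₙ` (valued in `ℝ`). -/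
abbrev MixFam (E : Type) (n : ℕ) : Fin n ⊕ Fin n → Type
  | .inl _ => E
  | .inr _ => ℝ

/-- The measurable-space structures on the codomains. -/
def mixMS (E : Type) [MeasurableSpace E] (n : ℕ) :
    ∀ j : Fin n ⊕ Fin n, MeasurableSpace (MixFam E n j)
  | .inl _ => (inferInstance : MeasurableSpace E)
  | .inr _ => (inferInstance : MeasurableSpace ℝ)

/-- The combined family `(X₁,…,Xₙ,B₁,…,Bₙ)`. -/
def mixFun {Ω : Type*} {E : Type} {n : ℕ} (X : Fin n → Ω → E) (B : Fin n → Ω → ℝ) :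
    ∀ j : Fin n ⊕ Fin n, Ω → MixFam E n j
  | .inl i => X i
  | .inr i => B i

/-- `Z₁,…,Zₙ` is a `λ`-contaminated sample of `P` (a measure on a normed space `E`,
supported in the ball of radius `r`): there are clean i.i.d. samples `Xᵢ ∼ P`, Bernoulli
variables `Bᵢ` with `P(Bᵢ = 1) = λᵢ`, mutually independent of the `Xᵢ`'s, and arbitrary
(measurable) outliers `X̃ᵢ` with `‖X̃ᵢ‖ ≤ r` a.s., such that
`Zᵢ = (1 − Bᵢ)Xᵢ + BᵢX̃ᵢ`. -/
def IsContamSample {Ω : Type*} {E : Type} [MeasurableSpace Ω] [MeasurableSpace E]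
    [NormedAddCommGroup E] [NormedSpace ℝ E]
    (Pr : Measure Ω) {n : ℕ} (P : Measure E) (r : ℝ) (lam : Fin n → ℝ)
    (X Xt : Fin n → Ω → E) (B : Fin n → Ω → ℝ) (Z : Fin n → Ω → E) : Prop :=
  (∀ i, Measurable (X i)) ∧ (∀ i, Measurable (B i)) ∧ (∀ i, Measurable (Xt i)) ∧
  (∀ i, Measure.map (X i) Pr = P) ∧
  (∀ i ω, B i ω = 0 ∨ B i ω = 1) ∧
  (∀ i, Pr {ω | B i ω = 1} = ENNReal.ofReal (lam i)) ∧
  iIndepFun (m := mixMS E n) (mixFun X B) Pr ∧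
  (∀ i, ∀ᵐ ω ∂Pr, ‖Xt i ω‖ ≤ r) ∧
  (∀ i ω, Z i ω = (1 - B i ω) • X i ω + (B i ω) • Xt i ω)

lemma aux_integrable_of_bound {Ω : Type*} [MeasurableSpace Ω] {Pr : Measure Ω}
    [IsFiniteMeasure Pr] {F : Type*} [NormedAddCommGroup F] {f : Ω → F}
    (hm : AEStronglyMeasurable f Pr) (c : ℝ) (h : ∀ᵐ ω ∂Pr, ‖f ω‖ ≤ c) :
    Integrable f Pr :=
  (integrable_const c).mono' hm h

lemma aux_centered_le {Ω : Type*} [MeasurableSpace Ω] (Pr : Measure Ω)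
    [IsProbabilityMeasure Pr] {E : Type*} [NormedAddCommGroup E] [InnerProductSpace ℝ E]
    [CompleteSpace E]
    {f : Ω → E} (hf : Integrable f Pr) (hf2 : Integrable (fun ω => ‖f ω‖^2) Pr) :
    ∫ ω, ‖f ω - ∫ ω', f ω' ∂Pr‖^2 ∂Pr ≤ ∫ ω, ‖f ω‖^2 ∂Pr := by
  set c := ∫ ω', f ω' ∂Pr with hc
  have hinner : Integrable (fun ω => (inner ℝ c (f ω) : ℝ)) Pr := by
    have := (innerSL ℝ c).integrable_comp hf
    simpa using this
  have h1 : Integrable (fun ω => ‖f ω‖^2 - 2 * (inner ℝ c (f ω) : ℝ)) Pr := by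
    exact hf2.sub (hinner.const_mul 2)
  have hpt : ∀ ω, ‖f ω - c‖^2 = ‖f ω‖^2 - 2 * (inner ℝ c (f ω) : ℝ) + ‖c‖^2 := by
    intro ω; rw [norm_sub_sq_real, real_inner_comm]
  calc ∫ ω, ‖f ω - c‖^2 ∂Pr
      = ∫ ω, (‖f ω‖^2 - 2 * (inner ℝ c (f ω):ℝ) + ‖c‖^2) ∂Pr := by simp_rw [hpt]
    _ = (∫ ω, (‖f ω‖^2 - 2 * (inner ℝ c (f ω):ℝ)) ∂Pr) + ∫ ω, (‖c‖^2 : ℝ) ∂Pr :=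
        integral_add h1 (integrable_const _)
    _ = ∫ ω, ‖f ω‖^2 ∂Pr - 2 * ∫ ω, (inner ℝ c (f ω):ℝ) ∂Pr + ‖c‖^2 := by
        rw [integral_sub hf2 (hinner.const_mul 2), integral_const_mul 2, integral_const,
          probReal_univ, one_smul]
    _ = ∫ ω, ‖f ω‖^2 ∂Pr - ‖c‖^2 := by
        rw [integral_inner hf c, ← hc, real_inner_self_eq_norm_sq]; ring
    _ ≤ ∫ ω, ‖f ω‖^2 ∂Pr := by nlinarith [sq_nonneg ‖c‖]

lemma aux_coord_le {d : ℕ} (x : EuclideanSpace ℝ (Fin d)) (k : Fin d) : |x k| ≤ ‖x‖ := by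
  calc |x k| = Real.sqrt (‖x k‖^2) := by
        rw [Real.sqrt_sq_eq_abs, Real.norm_eq_abs, abs_abs]
    _ ≤ Real.sqrt (∑ l, ‖x l‖^2) :=
        Real.sqrt_le_sqrt (Finset.single_le_sum (fun l _ => sq_nonneg ‖x l‖) (Finset.mem_univ k))
    _ = ‖x‖ := (EuclideanSpace.norm_eq x).symm

set_option maxHeartbeats 2000000 in
/-- for a `λ`-contaminated sample of a distribution `P` on `ℝ^d` supported in
the ball of radius `r`, the variance term of every simplex-weighted linear estimator satisfies
`E[‖Σᵢ wᵢ(Zᵢ − E[Zᵢ])‖²] ≤ 7r²‖w‖₂² + 16r²(wᵀλ)²`. -/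
theorem bounded_mean_estimation_variance_upper_bound
    (n d : ℕ) (hn : 1 ≤ n) (hd : 1 ≤ d) (r : ℝ) (hr : 0 < r)
    (lam : Fin n → ℝ) (hlam : ∀ i, lam i ∈ Set.Icc (0:ℝ) 1)
    (P : Measure (EuclideanSpace ℝ (Fin d))) [IsProbabilityMeasure P]
    (hP : ∀ᵐ x ∂P, ‖x‖ ≤ r)
    {Ω : Type*} [MeasurableSpace Ω] (Pr : Measure Ω) [IsProbabilityMeasure Pr]
    (X Xt : Fin n → Ω → EuclideanSpace ℝ (Fin d)) (B : Fin n → Ω → ℝ)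
    (Z : Fin n → Ω → EuclideanSpace ℝ (Fin d))
    (hsample : IsContamSample Pr P r lam X Xt B Z)
    (w : Fin n → ℝ) (hw : w ∈ stdSimplex ℝ (Fin n)) :
    ∫ ω, ‖∑ i, w i • (Z i ω - ∫ ω', Z i ω' ∂Pr)‖^2 ∂Pr ≤
      7 * r^2 * (∑ i, (w i)^2) + 16 * r^2 * (∑ i, w i * lam i)^2 := by
  classical
  obtain ⟨hXm, hBm, hXtm, hXlaw, hB01, hBlam, hindep, hXtr, hZdef⟩ := hsample
  have hw0 : ∀ i, 0 ≤ w i := hw.1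
  have hw1 : ∑ i, w i = 1 := hw.2
  have hr0 : (0:ℝ) ≤ r := hr.le
  -- basic facts about X
  have hXr : ∀ i, ∀ᵐ ω ∂Pr, ‖X i ω‖ ≤ r := by
    intro i
    have h1 : ∀ᵐ x ∂(Measure.map (X i) Pr), ‖x‖ ≤ r := by rw [hXlaw i]; exact hP
    exact (ae_map_iff (hXm i).aemeasurable
      (measurableSet_le measurable_norm measurable_const)).mp h1
  have hXint : ∀ i, Integrable (X i) Pr := fun i =>
    aux_integrable_of_bound (hXm i).aestronglyMeasurable r (hXr i)
  set m : EuclideanSpace ℝ (Fin d) := ∫ x, x ∂P with hm_def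
  have hm_eq : ∀ i, ∫ ω, X i ω ∂Pr = m := by
    intro i
    have h : ∫ x, (fun y => y) x ∂(Measure.map (X i) Pr) = ∫ ω, X i ω ∂Pr :=
      integral_map (hXm i).aemeasurable aestronglyMeasurable_id
    rw [hXlaw i] at h
    rw [hm_def, ← h]
  have i0 : Fin n := ⟨0, hn⟩
  have hmr : ‖m‖ ≤ r := by
    rw [← hm_eq i0]
    calc ‖∫ ω, X i0 ω ∂Pr‖ ≤ ∫ ω, ‖X i0 ω‖ ∂Pr := norm_integral_le_integral_norm _
      _ ≤ ∫ (_ : Ω), r ∂Pr := integral_mono_ae (hXint i0).norm (integrable_const r) (hXr i0)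
      _ = r := by simp
  -- centered X
  set V : Fin n → Ω → EuclideanSpace ℝ (Fin d) := fun i ω => X i ω - m with hV_def
  have hVm : ∀ i, Measurable (V i) := fun i => (hXm i).sub measurable_const
  have hVr : ∀ i, ∀ᵐ ω ∂Pr, ‖V i ω‖ ≤ 2*r := fun i =>
    (hXr i).mono fun ω h => (norm_sub_le _ _).trans (by linarith)
  have hVint : ∀ i, Integrable (V i) Pr := fun i =>
    aux_integrable_of_bound (hVm i).aestronglyMeasurable (2*r) (hVr i)
  have hVzero : ∀ i, ∫ ω, V i ω ∂Pr = 0 := by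
    intro i
    rw [hV_def]
    rw [integral_sub (hXint i) (integrable_const m), hm_eq i, integral_const,
      probReal_univ, one_smul, sub_self]
  have hVk_int : ∀ i k, Integrable (fun ω => V i ω k) Pr := by
    intro i k
    have h := (EuclideanSpace.proj (𝕜 := ℝ) k).integrable_comp (hVint i)
    simpa [PiLp.proj_apply] using h
  have hVk_zero : ∀ i k, ∫ ω, V i ω k ∂Pr = 0 := by
    intro i k
    have h := (EuclideanSpace.proj (𝕜 := ℝ) k).integral_comp_comm (hVint i)
    rw [hVzero i] at h
    simpa using h
  -- independence of the X's and of the B's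
  have hXij : ∀ i j, i ≠ j → IndepFun (X i) (X j) Pr := by
    intro i j hij
    exact hindep.indepFun (show (Sum.inl i : Fin n ⊕ Fin n) ≠ Sum.inl j by simpa using hij)
  have hBij : ∀ i j, i ≠ j → IndepFun (B i) (B j) Pr := by
    intro i j hij
    exact hindep.indepFun (show (Sum.inr i : Fin n ⊕ Fin n) ≠ Sum.inr j by simpa using hij)
  -- cross terms vanish
  have hVVzero : ∀ i j, i ≠ j → ∫ ω, (inner ℝ (V i ω) (V j ω) : ℝ) ∂Pr = 0 := by
    intro i j hij
    have hfun : ∀ ω, (inner ℝ (V i ω) (V j ω) : ℝ) = ∑ k, V i ω k * V j ω k := by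
      intro ω
      simp [PiLp.inner_apply, RCLike.inner_apply]
      exact Finset.sum_congr rfl fun _ _ => mul_comm _ _
    have hprod_int : ∀ k : Fin d, Integrable (fun ω => V i ω k * V j ω k) Pr := by
      intro k
      have hmeas : Measurable fun ω => V i ω k * V j ω k :=
        ((measurable_pi_apply k).comp ((WithLp.measurable_ofLp 2 _).comp (hVm i))).mul ((measurable_pi_apply k).comp ((WithLp.measurable_ofLp 2 _).comp (hVm j)))
      refine aux_integrable_of_bound hmeas.aestronglyMeasurable ((2*r)*(2*r)) ?_
      filter_upwards [hVr i, hVr j] with ω h1 h2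
      rw [Real.norm_eq_abs, abs_mul]
      exact mul_le_mul ((aux_coord_le _ k).trans h1) ((aux_coord_le _ k).trans h2)
        (abs_nonneg _) (by linarith)
    calc ∫ ω, (inner ℝ (V i ω) (V j ω) : ℝ) ∂Pr
        = ∫ ω, ∑ k, V i ω k * V j ω k ∂Pr := by simp_rw [hfun]
      _ = ∑ k, ∫ ω, V i ω k * V j ω k ∂Pr := integral_finset_sum _ fun k _ => hprod_int k
      _ = ∑ k, (∫ ω, V i ω k ∂Pr) * (∫ ω, V j ω k ∂Pr) := by
          refine Finset.sum_congr rfl fun k _ => ?_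
          have hik : IndepFun (fun ω => V i ω k) (fun ω => V j ω k) Pr := by
            have hφ : Measurable (fun x : EuclideanSpace ℝ (Fin d) => x k - m k) :=
              ((measurable_pi_apply k).comp (WithLp.measurable_ofLp 2 _)).sub measurable_const
            exact (hXij i j hij).comp hφ hφ
          exact hik.integral_fun_mul_eq_mul_integral (hVk_int i k).aestronglyMeasurable (hVk_int j k).aestronglyMeasurable
      _ = 0 := by simp [hVk_zero]
  -- diagonal bound
  have hVsq_int : ∀ i, Integrable (fun ω => ‖V i ω‖^2) Pr := by
    intro i
    refine aux_integrable_of_bound ((hVm i).norm.pow_const 2).aestronglyMeasurable ((2*r)^2) ?_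
    filter_upwards [hVr i] with ω h
    rw [Real.norm_eq_abs, abs_of_nonneg (by positivity)]
    exact pow_le_pow_left₀ (norm_nonneg _) h 2
  have hXsq_int : ∀ i, Integrable (fun ω => ‖X i ω‖^2) Pr := by
    intro i
    refine aux_integrable_of_bound ((hXm i).norm.pow_const 2).aestronglyMeasurable (r^2) ?_
    filter_upwards [hXr i] with ω h
    rw [Real.norm_eq_abs, abs_of_nonneg (by positivity)]
    exact pow_le_pow_left₀ (norm_nonneg _) h 2
  have hVdiag : ∀ i, ∫ ω, ‖V i ω‖^2 ∂Pr ≤ r^2 := by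
    intro i
    have h1 := aux_centered_le Pr (hXint i) (hXsq_int i)
    rw [hm_eq i] at h1
    have h2 : ∫ ω, ‖X i ω‖^2 ∂Pr ≤ ∫ (_ : Ω), r^2 ∂Pr := by
      refine integral_mono_ae (hXsq_int i) (integrable_const _) ?_
      filter_upwards [hXr i] with ω h
      exact pow_le_pow_left₀ (norm_nonneg _) h 2
    simpa using h1.trans h2
  -- the A term
  set A : Ω → EuclideanSpace ℝ (Fin d) := fun ω => ∑ i, w i • V i ω with hA_def
  have hAm : Measurable A := by
    refine Finset.measurable_sum _ fun i _ => ?_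
    exact (hVm i).const_smul (w i)
  have hAr : ∀ᵐ ω ∂Pr, ‖A ω‖ ≤ 2*r := by
    filter_upwards [ae_all_iff.mpr hVr] with ω h
    calc ‖A ω‖ ≤ ∑ i, ‖w i • V i ω‖ := norm_sum_le _ _
      _ ≤ ∑ i, w i * (2*r) := by
          refine Finset.sum_le_sum fun i _ => ?_
          rw [norm_smul, Real.norm_eq_abs, abs_of_nonneg (hw0 i)]
          exact mul_le_mul_of_nonneg_left (h i) (hw0 i)
      _ = 2*r := by rw [← Finset.sum_mul, hw1, one_mul]
  have hinner_int : ∀ i j, Integrable (fun ω => (inner ℝ (V i ω) (V j ω) : ℝ)) Pr := by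
    intro i j
    refine aux_integrable_of_bound ((hVm i).inner (hVm j)).aestronglyMeasurable ((2*r)*(2*r)) ?_
    filter_upwards [hVr i, hVr j] with ω h1 h2
    rw [Real.norm_eq_abs]
    exact (abs_real_inner_le_norm _ _).trans
      (mul_le_mul h1 h2 (norm_nonneg _) (by linarith))
  have hA : ∫ ω, ‖A ω‖^2 ∂Pr ≤ r^2 * ∑ i, (w i)^2 := by
    have hptA : ∀ ω, ‖A ω‖^2 = ∑ i, ∑ j, (w i * w j) * (inner ℝ (V i ω) (V j ω) : ℝ) := by
      intro ω
      rw [hA_def]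
      rw [← real_inner_self_eq_norm_sq]
      rw [sum_inner]
      refine Finset.sum_congr rfl fun i _ => ?_
      rw [inner_sum]
      refine Finset.sum_congr rfl fun j _ => ?_
      rw [real_inner_smul_left, real_inner_smul_right]
      ring
    calc ∫ ω, ‖A ω‖^2 ∂Pr
        = ∑ i, ∑ j, (w i * w j) * ∫ ω, (inner ℝ (V i ω) (V j ω) : ℝ) ∂Pr := by
          simp_rw [hptA]
          rw [integral_finset_sum _ fun i _ =>
            integrable_finset_sum _ fun j _ => (hinner_int i j).const_mul _]
          refine Finset.sum_congr rfl fun i _ => ?_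
          rw [integral_finset_sum _ fun j _ => (hinner_int i j).const_mul _]
          exact Finset.sum_congr rfl fun j _ => integral_const_mul _ _
      _ = ∑ i, (w i)^2 * ∫ ω, ‖V i ω‖^2 ∂Pr := by
          refine Finset.sum_congr rfl fun i _ => ?_
          rw [Finset.sum_eq_single i]
          · simp_rw [real_inner_self_eq_norm_sq]; ring_nf
          · intro j _ hji
            rw [hVVzero i j (Ne.symm hji), mul_zero]
          · intro h; exact absurd (Finset.mem_univ i) h
      _ ≤ ∑ i, (w i)^2 * r^2 :=
          Finset.sum_le_sum fun i _ => mul_le_mul_of_nonneg_left (hVdiag i) (sq_nonneg _)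
      _ = r^2 * ∑ i, (w i)^2 := by rw [Finset.mul_sum]; exact Finset.sum_congr rfl fun i _ => by ring
  -- facts about B
  have hB0 : ∀ i ω, 0 ≤ B i ω := by
    intro i ω; rcases hB01 i ω with h | h <;> rw [h] <;> norm_num
  have hB1 : ∀ i ω, B i ω ≤ 1 := by
    intro i ω; rcases hB01 i ω with h | h <;> rw [h] <;> norm_num
  have hBint : ∀ i, Integrable (B i) Pr := by
    intro i
    refine aux_integrable_of_bound (hBm i).aestronglyMeasurable 1 (ae_of_all _ fun ω => ?_)
    rw [Real.norm_eq_abs, abs_of_nonneg (hB0 i ω)]; exact hB1 i ω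
  have hBmean : ∀ i, ∫ ω, B i ω ∂Pr = lam i := by
    intro i
    have hset : MeasurableSet {ω | B i ω = 1} := hBm i (measurableSet_singleton 1)
    have hind : (fun ω => B i ω) = Set.indicator {ω | B i ω = 1} (fun _ => (1:ℝ)) := by
      funext ω
      rcases hB01 i ω with h | h <;>
        simp [Set.indicator_apply, Set.mem_setOf_eq, h]
    rw [hind, integral_indicator_const _ hset, measureReal_def, hBlam i, smul_eq_mul, mul_one,
      ENNReal.toReal_ofReal (hlam i).1]
  have hBprod_int : ∀ i j, Integrable (fun ω => B i ω * B j ω) Pr := by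
    intro i j
    refine aux_integrable_of_bound ((hBm i).mul (hBm j)).aestronglyMeasurable 1
      (ae_of_all _ fun ω => ?_)
    rw [Real.norm_eq_abs, abs_mul, abs_of_nonneg (hB0 i ω), abs_of_nonneg (hB0 j ω)]
    exact mul_le_one₀ (hB1 i ω) (hB0 j ω) (hB1 j ω)
  have hBprod : ∀ i j, i ≠ j → ∫ ω, B i ω * B j ω ∂Pr = lam i * lam j := by
    intro i j hij
    have h := (hBij i j hij).integral_fun_mul_eq_mul_integral (hBint i).aestronglyMeasurable (hBint j).aestronglyMeasurable
    rw [hBmean i, hBmean j] at h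
    exact h
  have hBsq : ∀ i, ∫ ω, B i ω * B i ω ∂Pr = lam i := by
    intro i
    have h : ∀ ω, B i ω * B i ω = B i ω := by
      intro ω; rcases hB01 i ω with h | h <;> rw [h] <;> ring
    simp_rw [h]
    exact hBmean i
  -- the G term
  set G : Ω → ℝ := fun ω => ∑ i, w i * B i ω with hG_def
  have hG0 : ∀ ω, 0 ≤ G ω := fun ω =>
    Finset.sum_nonneg fun i _ => mul_nonneg (hw0 i) (hB0 i ω)
  have hG1 : ∀ ω, G ω ≤ 1 := by
    intro ω
    calc G ω ≤ ∑ i, w i := Finset.sum_le_sum fun i _ =>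
          mul_le_of_le_one_right (hw0 i) (hB1 i ω)
      _ = 1 := hw1
  have hGm : Measurable G := by
    refine Finset.measurable_sum _ fun i _ => (hBm i).const_mul _
  have hGsq_int : Integrable (fun ω => G ω ^ 2) Pr := by
    refine aux_integrable_of_bound (hGm.pow_const 2).aestronglyMeasurable 1
      (ae_of_all _ fun ω => ?_)
    rw [Real.norm_eq_abs, abs_of_nonneg (by positivity)]
    calc G ω ^ 2 ≤ 1^2 := pow_le_pow_left₀ (hG0 ω) (hG1 ω) 2
      _ = 1 := one_pow 2
  have hGsq : ∫ ω, G ω ^ 2 ∂Pr ≤ (∑ i, (w i)^2) / 4 + (∑ i, w i * lam i)^2 := by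
    have hptG : ∀ ω, G ω ^ 2 = ∑ i, ∑ j, (w i * w j) * (B i ω * B j ω) := by
      intro ω
      rw [sq, hG_def]
      rw [Finset.sum_mul_sum]
      exact Finset.sum_congr rfl fun i _ => Finset.sum_congr rfl fun j _ => by ring
    have heq : ∫ ω, G ω ^ 2 ∂Pr = ∑ i, ∑ j, (w i * w j) * ∫ ω, B i ω * B j ω ∂Pr := by
      simp_rw [hptG]
      rw [integral_finset_sum _ fun i _ =>
        integrable_finset_sum _ fun j _ => (hBprod_int i j).const_mul _]
      refine Finset.sum_congr rfl fun i _ => ?_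
      rw [integral_finset_sum _ fun j _ => (hBprod_int i j).const_mul _]
      exact Finset.sum_congr rfl fun j _ => integral_const_mul _ _
    rw [heq]
    have hkey : ∀ i, ∑ j, (w i * w j) * ∫ ω, B i ω * B j ω ∂Pr
        = (w i)^2 * (lam i - lam i^2) + ∑ j, (w i * w j) * (lam i * lam j) := by
      intro i
      have hterm : ∀ j, (w i * w j) * ∫ ω, B i ω * B j ω ∂Pr
          = (w i * w j) * (lam i * lam j)
            + (if j = i then (w i)^2 * (lam i - lam i^2) else 0) := by
        intro j
        by_cases hji : j = i
        · subst hji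
          rw [hBsq j, if_pos rfl]
          ring
        · rw [hBprod i j (fun h => hji h.symm), if_neg hji, add_zero]
      rw [Finset.sum_congr rfl fun j _ => hterm j, Finset.sum_add_distrib,
        Finset.sum_ite_eq' Finset.univ i (fun _ => (w i)^2 * (lam i - lam i^2)),
        if_pos (Finset.mem_univ i)]
      ring
    rw [Finset.sum_congr rfl fun i _ => hkey i, Finset.sum_add_distrib]
    have h1 : ∑ i, (w i)^2 * (lam i - lam i^2) ≤ (∑ i, (w i)^2) / 4 := by
      calc ∑ i, (w i)^2 * (lam i - lam i^2) ≤ ∑ i, (w i)^2 * (1/4) := by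
            refine Finset.sum_le_sum fun i _ => ?_
            refine mul_le_mul_of_nonneg_left ?_ (sq_nonneg _)
            nlinarith [(hlam i).1, (hlam i).2, sq_nonneg (lam i - 1/2)]
        _ = (∑ i, (w i)^2) / 4 := by rw [← Finset.sum_mul]; ring
    have h2 : ∑ i, ∑ j, (w i * w j) * (lam i * lam j) = (∑ i, w i * lam i)^2 := by
      rw [sq, Finset.sum_mul_sum]
      exact Finset.sum_congr rfl fun i _ => Finset.sum_congr rfl fun j _ => by ring
    rw [h2]
    exact add_le_add h1 le_rfl
  -- the W and T terms
  set W : Fin n → Ω → EuclideanSpace ℝ (Fin d) := fun i ω => B i ω • (Xt i ω - X i ω)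
    with hW_def
  have hWm : ∀ i, Measurable (W i) := fun i => (hBm i).smul ((hXtm i).sub (hXm i))
  have hWr : ∀ i, ∀ᵐ ω ∂Pr, ‖W i ω‖ ≤ 2*r*B i ω := by
    intro i
    filter_upwards [hXr i, hXtr i] with ω h1 h2
    rw [hW_def]
    rw [norm_smul, Real.norm_eq_abs, abs_of_nonneg (hB0 i ω)]
    calc B i ω * ‖Xt i ω - X i ω‖ ≤ B i ω * (2*r) := by
          refine mul_le_mul_of_nonneg_left ?_ (hB0 i ω)
          exact (norm_sub_le _ _).trans (by linarith)
      _ = 2*r*B i ω := by ring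
  have hWbd : ∀ i, ∀ᵐ ω ∂Pr, ‖W i ω‖ ≤ 2*r := by
    intro i
    filter_upwards [hWr i] with ω h
    exact h.trans (by nlinarith [hB1 i ω, hB0 i ω])
  have hWint : ∀ i, Integrable (W i) Pr := fun i =>
    aux_integrable_of_bound (hWm i).aestronglyMeasurable (2*r) (hWbd i)
  set T : Ω → EuclideanSpace ℝ (Fin d) := fun ω => ∑ i, w i • W i ω with hT_def
  have hTm : Measurable T := by
    refine Finset.measurable_sum _ fun i _ => (hWm i).const_smul (w i)
  have hTbd : ∀ᵐ ω ∂Pr, ‖T ω‖ ≤ 2*r*G ω := by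
    filter_upwards [ae_all_iff.mpr hWr] with ω h
    calc ‖T ω‖ ≤ ∑ i, ‖w i • W i ω‖ := norm_sum_le _ _
      _ ≤ ∑ i, w i * (2*r*B i ω) := by
          refine Finset.sum_le_sum fun i _ => ?_
          rw [norm_smul, Real.norm_eq_abs, abs_of_nonneg (hw0 i)]
          exact mul_le_mul_of_nonneg_left (h i) (hw0 i)
      _ = 2*r*G ω := by
          rw [hG_def, Finset.mul_sum]
          exact Finset.sum_congr rfl fun i _ => by ring
  have hTr : ∀ᵐ ω ∂Pr, ‖T ω‖ ≤ 2*r := by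
    filter_upwards [hTbd] with ω h
    exact h.trans (by nlinarith [hG1 ω, hG0 ω])
  have hTint : Integrable T Pr := aux_integrable_of_bound hTm.aestronglyMeasurable (2*r) hTr
  have hTsq_int : Integrable (fun ω => ‖T ω‖^2) Pr := by
    refine aux_integrable_of_bound (hTm.norm.pow_const 2).aestronglyMeasurable ((2*r)^2) ?_
    filter_upwards [hTr] with ω h
    rw [Real.norm_eq_abs, abs_of_nonneg (by positivity)]
    exact pow_le_pow_left₀ (norm_nonneg _) h 2
  have hTsq : ∫ ω, ‖T ω‖^2 ∂Pr ≤ 4*r^2 * ∫ ω, G ω ^2 ∂Pr := by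
    have h1 : ∫ ω, ‖T ω‖^2 ∂Pr ≤ ∫ ω, 4*r^2 * G ω ^2 ∂Pr := by
      refine integral_mono_ae hTsq_int (hGsq_int.const_mul _) ?_
      filter_upwards [hTbd] with ω h
      nlinarith [norm_nonneg (T ω), hG0 ω]
    rwa [integral_const_mul] at h1
  have hCle : ∫ ω, ‖T ω - ∫ ω', T ω' ∂Pr‖^2 ∂Pr ≤ ∫ ω, ‖T ω‖^2 ∂Pr :=
    aux_centered_le Pr hTint hTsq_int
  -- decomposition Z = X + W
  have hZXW : ∀ i ω, Z i ω = X i ω + W i ω := by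
    intro i ω
    rw [hZdef i ω]
    show _ = X i ω + B i ω • (Xt i ω - X i ω)
    rw [sub_smul, one_smul, smul_sub]
    abel
  have hZint : ∀ i, Integrable (Z i) Pr := by
    intro i
    have : Z i = fun ω => X i ω + W i ω := funext (hZXW i)
    rw [this]
    exact (hXint i).add (hWint i)
  have hZmean : ∀ i, ∫ ω', Z i ω' ∂Pr = m + ∫ ω', W i ω' ∂Pr := by
    intro i
    simp_rw [hZXW i]
    rw [integral_add (hXint i) (hWint i), hm_eq i]
  have hTmean : ∫ ω', T ω' ∂Pr = ∑ i, w i • ∫ ω', W i ω' ∂Pr := by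
    simp only [hT_def]
    rw [integral_finset_sum _ fun i (_ : i ∈ Finset.univ) =>
      (show Integrable (fun ω => w i • W i ω) Pr from (hWint i).smul (w i))]
    exact Finset.sum_congr rfl fun i _ => integral_smul _ _
  have hdecomp : ∀ ω, (∑ i, w i • (Z i ω - ∫ ω', Z i ω' ∂Pr))
      = A ω + (T ω - ∫ ω', T ω' ∂Pr) := by
    intro ω
    rw [hTmean, hA_def, hT_def]
    rw [← Finset.sum_sub_distrib, ← Finset.sum_add_distrib]
    refine Finset.sum_congr rfl fun i _ => ?_
    rw [hZmean i, hZXW i ω]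
    simp only [hV_def]
    have harr : X i ω + W i ω - (m + ∫ ω', W i ω' ∂Pr)
        = (X i ω - m) + (W i ω - ∫ ω', W i ω' ∂Pr) := by abel
    rw [harr, smul_add, smul_sub, smul_sub]
  set C : Ω → EuclideanSpace ℝ (Fin d) := fun ω => T ω - ∫ ω', T ω' ∂Pr with hC_def
  have hCm : Measurable C := hTm.sub measurable_const
  have hCr : ∀ᵐ ω ∂Pr, ‖C ω‖ ≤ 4*r := by
    have hTmr : ‖∫ ω', T ω' ∂Pr‖ ≤ 2*r := by
      calc ‖∫ ω', T ω' ∂Pr‖ ≤ ∫ ω', ‖T ω'‖ ∂Pr := norm_integral_le_integral_norm _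
        _ ≤ ∫ (_ : Ω), 2*r ∂Pr := integral_mono_ae hTint.norm (integrable_const _) hTr
        _ = 2*r := by simp
    filter_upwards [hTr] with ω h
    calc ‖C ω‖ ≤ ‖T ω‖ + ‖∫ ω', T ω' ∂Pr‖ := norm_sub_le _ _
      _ ≤ 2*r + 2*r := add_le_add h hTmr
      _ = 4*r := by ring
  have hCsq_int : Integrable (fun ω => ‖C ω‖^2) Pr := by
    refine aux_integrable_of_bound (hCm.norm.pow_const 2).aestronglyMeasurable ((4*r)^2) ?_
    filter_upwards [hCr] with ω h
    rw [Real.norm_eq_abs, abs_of_nonneg (by positivity)]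
    exact pow_le_pow_left₀ (norm_nonneg _) h 2
  have hAsq_int : Integrable (fun ω => ‖A ω‖^2) Pr := by
    refine aux_integrable_of_bound (hAm.norm.pow_const 2).aestronglyMeasurable ((2*r)^2) ?_
    filter_upwards [hAr] with ω h
    rw [Real.norm_eq_abs, abs_of_nonneg (by positivity)]
    exact pow_le_pow_left₀ (norm_nonneg _) h 2
  have hACsq_int : Integrable (fun ω => ‖A ω + C ω‖^2) Pr := by
    refine aux_integrable_of_bound ((hAm.add hCm).norm.pow_const 2).aestronglyMeasurable
      ((6*r)^2) ?_
    filter_upwards [hAr, hCr] with ω h1 h2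
    rw [Real.norm_eq_abs, abs_of_nonneg (by positivity)]
    refine pow_le_pow_left₀ (norm_nonneg _) ((norm_add_le _ _).trans (by linarith)) 2
  -- final assembly
  have hmain : ∫ ω, ‖∑ i, w i • (Z i ω - ∫ ω', Z i ω' ∂Pr)‖^2 ∂Pr
      = ∫ ω, ‖A ω + C ω‖^2 ∂Pr := by
    refine integral_congr_ae (ae_of_all _ fun ω => ?_)
    exact congrArg (fun t => ‖t‖^2) (hdecomp ω)
  rw [hmain]
  have hsplit : ∫ ω, ‖A ω + C ω‖^2 ∂Pr ≤ 2 * ∫ ω, ‖A ω‖^2 ∂Pr + 2 * ∫ ω, ‖C ω‖^2 ∂Pr := by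
    have h1 : ∫ ω, ‖A ω + C ω‖^2 ∂Pr ≤ ∫ ω, (2*‖A ω‖^2 + 2*‖C ω‖^2) ∂Pr := by
      refine integral_mono_ae hACsq_int ((hAsq_int.const_mul 2).add (hCsq_int.const_mul 2))
        (ae_of_all _ fun ω => ?_)
      show ‖A ω + C ω‖^2 ≤ 2*‖A ω‖^2 + 2*‖C ω‖^2
      have h := norm_add_le (A ω) (C ω)
      nlinarith [norm_nonneg (A ω), norm_nonneg (C ω), norm_nonneg (A ω + C ω),
        sq_nonneg (‖A ω‖ - ‖C ω‖)]
    rwa [integral_add (hAsq_int.const_mul 2) (hCsq_int.const_mul 2),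
      integral_const_mul, integral_const_mul] at h1
  have hCfin : ∫ ω, ‖C ω‖^2 ∂Pr ≤ r^2 * (∑ i, (w i)^2) + 4*r^2 * (∑ i, w i * lam i)^2 := by
    calc ∫ ω, ‖C ω‖^2 ∂Pr ≤ ∫ ω, ‖T ω‖^2 ∂Pr := hCle
      _ ≤ 4*r^2 * ∫ ω, G ω ^2 ∂Pr := hTsq
      _ ≤ 4*r^2 * ((∑ i, (w i)^2) / 4 + (∑ i, w i * lam i)^2) := by
          refine mul_le_mul_of_nonneg_left hGsq (by positivity)
      _ = r^2 * (∑ i, (w i)^2) + 4*r^2 * (∑ i, w i * lam i)^2 := by ring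
  have hw2ered : (0:ℝ) ≤ ∑ i, (w i)^2 := Finset.sum_nonneg fun i _ => sq_nonneg _
  nlinarith [hsplit, hA, hCfin, sq_nonneg (∑ i, w i * lam i), sq_nonneg r, hw2ered]
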